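/- Let g : X → ℝ be convex, differentiable, and strictly positive on an open convex set X ⊆ ℝⁿ. Then f(x) = log(g(x)) is invex with kernel η(x,y) = (g(x)/g(y))·(y - x); that is, f(y) - f(x) ≥ ⟨∇f(x), η(x,y)⟩ for all x, y ∈ X. -/

import Mathlib

open RealInnerProductSpace

-- First-order condition for convex differentiable functions:
-- `⟪∇g x, y - x⟫ ≤ g y - g x`.
lemma first_order_convex {n : ℕ} {X : Set (EuclideanSpace ℝ (Fin n))}
    {g : EuclideanSpace ℝ (Fin n) → ℝ} (hgconv : ConvexOn ℝ X g)
    {x y : EuclideanSpace ℝ (Fin n)} (hx : x ∈ X) (hy : y ∈ X)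
    (hd : DifferentiableAt ℝ g x) :
    (fderiv ℝ g x) (y - x) ≤ g y - g x := by
  set L : ℝ →ᵃ[ℝ] EuclideanSpace ℝ (Fin n) := AffineMap.lineMap x y with hL
  have hφconv : ConvexOn ℝ (L ⁻¹' X) (g ∘ L) := hgconv.comp_affineMap L
  have h0 : (0 : ℝ) ∈ L ⁻¹' X := by simp [hL, AffineMap.lineMap_apply_zero, hx]
  have h1 : (1 : ℝ) ∈ L ⁻¹' X := by simp [hL, AffineMap.lineMap_apply_one, hy]
  have hL0 : L 0 = x := AffineMap.lineMap_apply_zero x y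
  have hcurve : HasDerivAt (fun t : ℝ => L t) (y - x) 0 := by
    have h : HasDerivAt (fun t : ℝ => t • (y - x) + x) (y - x) 0 := by
      simpa using ((hasDerivAt_id (0 : ℝ)).smul_const (y - x)).add_const x
    convert h using 2 with t
    rw [hL, AffineMap.lineMap_apply, vsub_eq_sub, vadd_eq_add]
  have hgd : HasFDerivAt g (fderiv ℝ g x) (L 0) := hL0.symm ▸ hd.hasFDerivAt
  have hφ : HasDerivAt (g ∘ L) ((fderiv ℝ g x) (y - x)) 0 :=
    hgd.comp_hasDerivAt 0 hcurve
  have := hφconv.le_slope_of_hasDerivAt h0 h1 one_pos hφ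
  simpa [slope_def_field, hL, AffineMap.lineMap_apply_zero, AffineMap.lineMap_apply_one] using this

/-- `f = log ∘ g` with `g` convex positive is invex with kernel
`η(x,y) = (g(x)/g(y))·(y-x)`. -/
theorem invex_log_of_convex {n : ℕ}
    (X : Set (EuclideanSpace ℝ (Fin n))) (hX : IsOpen X) (hXc : Convex ℝ X) (hXne : X.Nonempty)
    (g : EuclideanSpace ℝ (Fin n) → ℝ)
    (hgconv : ConvexOn ℝ X g) (hgdiff : ∀ x ∈ X, DifferentiableAt ℝ g x)
    (hgpos : ∀ x ∈ X, 0 < g x) :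
    ∀ x ∈ X, ∀ y ∈ X,
      Real.log (g y) - Real.log (g x) ≥
        ⟪gradient (fun z => Real.log (g z)) x, (g x / g y) • (y - x)⟫ := by
  intro x hx y hy
  have hgx := hgpos x hx
  have hgy := hgpos y hy
  have hd := hgdiff x hx
  -- gradient of log ∘ g
  have hflog : HasFDerivAt (fun z => Real.log (g z)) ((g x)⁻¹ • fderiv ℝ g x) x :=
    (Real.hasDerivAt_log hgx.ne').comp_hasFDerivAt x hd.hasFDerivAt
  have hgrad : gradient (fun z => Real.log (g z)) x =
      (InnerProductSpace.toDual ℝ _).symm ((g x)⁻¹ • fderiv ℝ g x) := by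
    rw [gradient, hflog.fderiv]
  rw [hgrad, real_inner_smul_right, InnerProductSpace.toDual_symm_apply]
  have hD := first_order_convex hgconv hx hy hd
  set D := (fderiv ℝ g x) (y - x) with hDdef
  have key : g x / g y * ((g x)⁻¹ • fderiv ℝ g x) (y - x) = D / g y := by
    simp [hDdef]
    field_simp
  rw [key]
  have h1 : D / g y ≤ 1 - g x / g y := by
    rw [div_le_iff₀ hgy]
    have : (1 - g x / g y) * g y = g y - g x := by field_simp
    rw [this]; exact hD
  have h2 : 1 - g x / g y ≤ Real.log (g y) - Real.log (g x) := by
    have hlog : Real.log (g x / g y) ≤ g x / g y - 1 :=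
      Real.log_le_sub_one_of_pos (div_pos hgx hgy)
    rw [Real.log_div hgx.ne' hgy.ne'] at hlog
    linarith
  linarith
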